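/- arXiv:2404.19227 — 4 statements merged into one kernel-verified Lean document; each statement's English description precedes it below -/
import Mathlib

section
/- Let E be a real inner product space, and let c ∈ E be nonzero. For every nonzero x ∈ E, the norm of the gradient at x of the cosine-similarity map y ↦ ⟪y, c⟫ / (‖y‖ · ‖c‖) equals √(1 − cos(x,c)²) / ‖x‖, where cos(x,c) := ⟪x, c⟫ / (‖x‖ · ‖c‖). -/
open Real

lemma hasFDerivAt_norm' {E : Type*} [NormedAddCommGroup E] [InnerProductSpace ℝ E]
    (x : E) (hx : x ≠ 0) :
    HasFDerivAt (fun y : E => ‖y‖) (‖x‖⁻¹ • innerSL ℝ x) x := by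
  have h1 : HasFDerivAt (fun y : E => ‖y‖ ^ 2) (2 • innerSL ℝ x) x :=
    (hasStrictFDerivAt_norm_sq x).hasFDerivAt
  have hx0 : ‖x‖ ≠ 0 := norm_ne_zero_iff.mpr hx
  have h2 := h1.sqrt (by positivity)
  have e1 : (fun y : E => Real.sqrt (‖y‖ ^ 2)) = fun y : E => ‖y‖ := by
    funext y; exact Real.sqrt_sq (norm_nonneg y)
  rw [e1] at h2
  convert h2 using 1
  rw [Real.sqrt_sq (norm_nonneg x)]
  ext v
  simp only [ContinuousLinearMap.coe_smul', Pi.smul_apply, smul_eq_mul]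
  ring_nf

theorem cosine_similarity_gradient_norm
    {E : Type*} [NormedAddCommGroup E] [InnerProductSpace ℝ E] [CompleteSpace E]
    (c : E) (hc : c ≠ 0) (x : E) (hx : x ≠ 0) :
    ‖gradient (fun y => (inner ℝ y c : ℝ) / (‖y‖ * ‖c‖)) x‖ =
      Real.sqrt (1 - ((inner ℝ x c : ℝ) / (‖x‖ * ‖c‖)) ^ 2) / ‖x‖ := by
  have hx0 : ‖x‖ ≠ 0 := norm_ne_zero_iff.mpr hx
  have hc0 : ‖c‖ ≠ 0 := norm_ne_zero_iff.mpr hc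
  have hxp : (0:ℝ) < ‖x‖ := norm_pos_iff.mpr hx
  have hcp : (0:ℝ) < ‖c‖ := norm_pos_iff.mpr hc
  set G : E := (‖x‖ * ‖c‖)⁻¹ • c - ((inner ℝ x c : ℝ) / (‖x‖ ^ 3 * ‖c‖)) • x with hG
  -- g: y ↦ ⟪y, c⟫ is continuous linear
  have hg : HasFDerivAt (fun y : E => (inner ℝ y c : ℝ)) (innerSL ℝ c) x := by
    have e : (fun y : E => (inner ℝ y c : ℝ)) = fun y : E => (inner ℝ c y : ℝ) :=
      funext fun y => (real_inner_comm y c).symm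
    rw [e]; exact (innerSL ℝ c).hasFDerivAt
  -- h: y ↦ ‖y‖ * ‖c‖
  have hnorm := hasFDerivAt_norm' x hx
  have hh : HasFDerivAt (fun y : E => ‖y‖ * ‖c‖) (‖c‖ • (‖x‖⁻¹ • innerSL ℝ x)) x :=
    hnorm.mul_const ‖c‖
  have hhx : ‖x‖ * ‖c‖ ≠ 0 := mul_ne_zero hx0 hc0
  -- inverse
  have hinv : HasFDerivAt (fun y : E => (‖y‖ * ‖c‖)⁻¹)
      ((-((‖x‖ * ‖c‖) ^ 2)⁻¹) • (‖c‖ • (‖x‖⁻¹ • innerSL ℝ x))) x := by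
    have := (hasDerivAt_inv hhx).comp_hasFDerivAt x hh
    simpa [Function.comp_def] using this
  have hf : HasGradientAt (fun y : E => (inner ℝ y c : ℝ) / (‖y‖ * ‖c‖)) G x := by
    rw [hasGradientAt_iff_hasFDerivAt]
    have hmul := hg.mul hinv
    have e : ∀ y : E, (inner ℝ y c : ℝ) * (‖y‖ * ‖c‖)⁻¹ = (inner ℝ y c : ℝ) / (‖y‖ * ‖c‖) := by
      intro y; rw [div_eq_mul_inv]
    have hmul' : HasFDerivAt (fun y : E => (inner ℝ y c : ℝ) / (‖y‖ * ‖c‖))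
        ((inner ℝ x c : ℝ) • ((-((‖x‖ * ‖c‖) ^ 2)⁻¹) • (‖c‖ • (‖x‖⁻¹ • innerSL ℝ x))) +
          (‖x‖ * ‖c‖)⁻¹ • innerSL ℝ c) x := by
      have h2 : HasFDerivAt (fun y : E => (inner ℝ y c : ℝ) * (‖y‖ * ‖c‖)⁻¹) _ x := hmul
      simpa only [e] using h2
    convert hmul' using 1
    · rfl
    ext v
    simp only [InnerProductSpace.toDual_apply_apply, ContinuousLinearMap.add_apply,
      ContinuousLinearMap.coe_smul', Pi.smul_apply,
      innerSL_apply_apply, smul_eq_mul, hG, inner_sub_left, inner_smul_left, RCLike.inner_apply,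
      conj_trivial]
    field_simp
    ring
  rw [hf.gradient]
  -- now compute the norm of G
  have hGsq : ‖G‖ ^ 2 = (1 - ((inner ℝ x c : ℝ) / (‖x‖ * ‖c‖)) ^ 2) / ‖x‖ ^ 2 := by
    rw [← real_inner_self_eq_norm_sq]
    simp only [hG, inner_sub_sub_self, inner_smul_left, inner_smul_right, RCLike.inner_apply,
      conj_trivial, real_inner_self_eq_norm_sq]
    rw [real_inner_comm c x]
    field_simp
    ring
  have hnn : (0:ℝ) ≤ 1 - ((inner ℝ x c : ℝ) / (‖x‖ * ‖c‖)) ^ 2 := by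
    have hcs := abs_real_inner_le_norm x c
    have h1 : |(inner ℝ x c : ℝ) / (‖x‖ * ‖c‖)| ≤ 1 := by
      rw [abs_div, abs_of_pos (by positivity : (0:ℝ) < ‖x‖ * ‖c‖)]
      rw [div_le_one (by positivity)]
      exact hcs
    nlinarith [abs_nonneg ((inner ℝ x c : ℝ) / (‖x‖ * ‖c‖)), sq_abs ((inner ℝ x c : ℝ) / (‖x‖ * ‖c‖))]
  have : ‖G‖ = Real.sqrt (‖G‖ ^ 2) := (Real.sqrt_sq (norm_nonneg G)).symm
  rw [this, hGsq, Real.sqrt_div hnn, Real.sqrt_sq (norm_nonneg x)]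
end

section
/- Let E be a real inner product space, τ > 0, and c^u, c^a ∈ E nonzero, and let g(x) := exp(τ·cos(x,c^u)) / (exp(τ·cos(x,c^u)) + exp(τ·cos(x,c^a))) where cos(x,c) := ⟪x, c⟫ / (‖x‖ · ‖c‖). Then for every nonzero x ∈ E and every δ ∈ E with ‖δ‖ < ‖x‖, one has |g(x + δ) − g(x)| ≤ (τ/2) · ‖δ‖ / (‖x‖ − ‖δ‖). -/
/-- Cosine similarity of two vectors in a real inner product space. -/
noncomputable def cosSim {E : Type*} [NormedAddCommGroup E] [InnerProductSpace ℝ E]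
    (x c : E) : ℝ :=
  (inner ℝ x c : ℝ) / (‖x‖ * ‖c‖)

/-- The Espresso confidence function
`g(x) = exp(τ·cos(x,cᵘ)) / (exp(τ·cos(x,cᵘ)) + exp(τ·cos(x,cᵃ)))`. -/
noncomputable def espressoG {E : Type*} [NormedAddCommGroup E] [InnerProductSpace ℝ E]
    (τ : ℝ) (cu ca : E) (x : E) : ℝ :=
  Real.exp (τ * cosSim x cu) /
    (Real.exp (τ * cosSim x cu) + Real.exp (τ * cosSim x ca))

open Real

lemma normalized_sub_le {E : Type*} [NormedAddCommGroup E] [InnerProductSpace ℝ E]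
    (x δ : E) (hx : x ≠ 0) (hδ : ‖δ‖ < ‖x‖) :
    ‖(‖x + δ‖⁻¹ • (x + δ)) - (‖x‖⁻¹ • x)‖ ≤ ‖δ‖ / (‖x‖ - ‖δ‖) := by
  set y := x + δ with hy
  set a := ‖x‖
  set b := ‖y‖
  set d := ‖δ‖
  have hd0 : 0 ≤ d := norm_nonneg _
  have ha0 : 0 < a := lt_of_le_of_lt hd0 hδ
  have had : 0 < a - d := by linarith
  have hba : a - d ≤ b := by
    have h1 : ‖x‖ ≤ ‖x + δ‖ + ‖δ‖ := by
      calc ‖x‖ = ‖x + δ - δ‖ := by rw [add_sub_cancel_right]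
        _ ≤ ‖x + δ‖ + ‖δ‖ := norm_sub_le _ _
    linarith
  have hb0 : 0 < b := lt_of_lt_of_le had hba
  have hyne : y ≠ 0 := norm_pos_iff.mp hb0
  set u := (‖y‖⁻¹ • y) with hu
  set v := (‖x‖⁻¹ • x) with hv
  have hun : ‖u‖ = 1 := norm_smul_inv_norm hyne
  have hvn : ‖v‖ = 1 := norm_smul_inv_norm hx
  set p : ℝ := inner ℝ y x with hp
  have huv : (inner ℝ u v : ℝ) = b⁻¹ * (a⁻¹ * p) := by
    rw [hu, hv, real_inner_smul_left, real_inner_smul_right]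
  have hsq : ‖u - v‖ ^ 2 = 2 - 2 * (b⁻¹ * (a⁻¹ * p)) := by
    rw [← huv, @norm_sub_sq_real, hun, hvn]; ring
  have hpdef : d ^ 2 = b ^ 2 - 2 * p + a ^ 2 := by
    have hdyx : d = ‖y - x‖ := by rw [hy, add_sub_cancel_left]
    rw [hdyx, @norm_sub_sq_real]
  have key : (2 * (a * b) - 2 * p) * (a - d) ^ 2 ≤ d ^ 2 * (a * b) := by
    have e1 : 2 * (a * b) - 2 * p = d ^ 2 - (a - b) ^ 2 := by linarith [hpdef]
    rw [e1]
    have h2 : (a - d) ^ 2 ≤ a * b := by nlinarith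
    have h3 : d ^ 2 - (a - b) ^ 2 ≤ d ^ 2 := by nlinarith [sq_nonneg (a - b)]
    exact mul_le_mul h3 h2 (sq_nonneg _) (sq_nonneg _)
  have hfrac : ‖u - v‖ ^ 2 ≤ (d / (a - d)) ^ 2 := by
    rw [hsq, div_pow]
    rw [show 2 - 2 * (b⁻¹ * (a⁻¹ * p)) = (2 * (a * b) - 2 * p) / (a * b) by
      field_simp]
    rw [div_le_div_iff₀ (mul_pos ha0 hb0) (pow_pos had 2)]
    linarith
  have h1 : 0 ≤ ‖u - v‖ := norm_nonneg _
  have h2 : 0 ≤ d / (a - d) := div_nonneg hd0 had.le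
  nlinarith [hfrac, h1, h2]

lemma cosSim_diff_le {E : Type*} [NormedAddCommGroup E] [InnerProductSpace ℝ E]
    (c x δ : E) (hx : x ≠ 0) (hδ : ‖δ‖ < ‖x‖) :
    |cosSim (x + δ) c - cosSim x c| ≤ ‖δ‖ / (‖x‖ - ‖δ‖) := by
  have hrw : ∀ z : E, cosSim z c = (inner ℝ (‖z‖⁻¹ • z) (‖c‖⁻¹ • c) : ℝ) := by
    intro z
    rw [real_inner_smul_left, real_inner_smul_right, cosSim]
    rw [div_eq_mul_inv, mul_inv]
    ring
  rw [hrw, hrw, ← inner_sub_left]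
  calc |(inner ℝ ((‖x + δ‖⁻¹ • (x + δ)) - (‖x‖⁻¹ • x)) (‖c‖⁻¹ • c) : ℝ)|
      ≤ ‖(‖x + δ‖⁻¹ • (x + δ)) - (‖x‖⁻¹ • x)‖ * ‖(‖c‖⁻¹ • c)‖ :=
        abs_real_inner_le_norm _ _
    _ ≤ (‖δ‖ / (‖x‖ - ‖δ‖)) * 1 := by
        apply mul_le_mul (normalized_sub_le x δ hx hδ)
        · rcases eq_or_ne c 0 with rfl | hc
          · simp
          · exact le_of_eq (norm_smul_inv_norm hc)
        · exact norm_nonneg _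
        · exact div_nonneg (norm_nonneg _) (by linarith [norm_nonneg δ, norm_nonneg x])
    _ = ‖δ‖ / (‖x‖ - ‖δ‖) := mul_one _

lemma logistic_lipschitz (s t : ℝ) :
    |exp s / (exp s + 1) - exp t / (exp t + 1)| ≤ |s - t| / 4 := by
  set f : ℝ → ℝ := fun t => exp t / (exp t + 1) with hf
  have hder : ∀ u : ℝ, HasDerivAt f (exp u / (exp u + 1) ^ 2) u := by
    intro u
    have h1 : (0:ℝ) < exp u + 1 := by positivity
    have h := (Real.hasDerivAt_exp u).div ((Real.hasDerivAt_exp u).add_const 1) h1.ne'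
    exact h.congr_deriv (by ring)
  have hlip : LipschitzWith (1/4 : NNReal) f := by
    apply lipschitzWith_of_nnnorm_deriv_le (fun u => (hder u).differentiableAt)
    intro u
    rw [(hder u).deriv]
    rw [← NNReal.coe_le_coe, coe_nnnorm]
    have h1 : (0:ℝ) < exp u + 1 := by positivity
    rw [Real.norm_eq_abs, abs_of_nonneg (by positivity)]
    push_cast
    rw [div_le_iff₀ (by positivity)]
    nlinarith [sq_nonneg (exp u - 1), exp_pos u]
  have := hlip.dist_le_mul s t
  rw [Real.dist_eq, Real.dist_eq] at this
  push_cast at this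
  linarith [this]

theorem espresso_lipschitz_bound
    {E : Type*} [NormedAddCommGroup E] [InnerProductSpace ℝ E] [CompleteSpace E]
    (τ : ℝ) (hτ : 0 < τ) (cu ca : E) (hcu : cu ≠ 0) (hca : ca ≠ 0)
    (x : E) (hx : x ≠ 0) (δ : E) (hδ : ‖δ‖ < ‖x‖) :
    |espressoG τ cu ca (x + δ) - espressoG τ cu ca x| ≤
      (τ / 2) * ‖δ‖ / (‖x‖ - ‖δ‖) := by
  have hg : ∀ z : E, espressoG τ cu ca z =
      exp (τ * (cosSim z cu - cosSim z ca)) / (exp (τ * (cosSim z cu - cosSim z ca)) + 1) := by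
    intro z
    rw [espressoG, mul_sub, Real.exp_sub]
    have h1 := Real.exp_pos (τ * cosSim z cu)
    have h2 := Real.exp_pos (τ * cosSim z ca)
    field_simp
  rw [hg, hg]
  have hlog := logistic_lipschitz (τ * (cosSim (x + δ) cu - cosSim (x + δ) ca))
    (τ * (cosSim x cu - cosSim x ca))
  have hu := cosSim_diff_le cu x δ hx hδ
  have ha := cosSim_diff_le ca x δ hx hδ
  have habs : |τ * (cosSim (x + δ) cu - cosSim (x + δ) ca) - τ * (cosSim x cu - cosSim x ca)|
      ≤ τ * (2 * (‖δ‖ / (‖x‖ - ‖δ‖))) := by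
    rw [show τ * (cosSim (x + δ) cu - cosSim (x + δ) ca) - τ * (cosSim x cu - cosSim x ca)
        = τ * ((cosSim (x + δ) cu - cosSim x cu) - (cosSim (x + δ) ca - cosSim x ca)) by ring]
    rw [abs_mul, abs_of_pos hτ]
    apply mul_le_mul_of_nonneg_left _ hτ.le
    calc |(cosSim (x + δ) cu - cosSim x cu) - (cosSim (x + δ) ca - cosSim x ca)|
        ≤ |cosSim (x + δ) cu - cosSim x cu| + |cosSim (x + δ) ca - cosSim x ca| :=
          abs_sub _ _
      _ ≤ ‖δ‖ / (‖x‖ - ‖δ‖) + ‖δ‖ / (‖x‖ - ‖δ‖) := add_le_add hu ha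
      _ = 2 * (‖δ‖ / (‖x‖ - ‖δ‖)) := by ring
  calc |exp (τ * (cosSim (x + δ) cu - cosSim (x + δ) ca)) /
          (exp (τ * (cosSim (x + δ) cu - cosSim (x + δ) ca)) + 1) -
        exp (τ * (cosSim x cu - cosSim x ca)) / (exp (τ * (cosSim x cu - cosSim x ca)) + 1)|
      ≤ |τ * (cosSim (x + δ) cu - cosSim (x + δ) ca) - τ * (cosSim x cu - cosSim x ca)| / 4 :=
        hlog
    _ ≤ (τ * (2 * (‖δ‖ / (‖x‖ - ‖δ‖)))) / 4 := by linarith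
    _ = (τ / 2) * ‖δ‖ / (‖x‖ - ‖δ‖) := by ring
end

section
/- Let E be a real inner product space, τ > 0, c^u, c^a ∈ E nonzero, and g(x) := exp(τ·cos(x,c^u)) / (exp(τ·cos(x,c^u)) + exp(τ·cos(x,c^a))) where cos(x,c) := ⟪x, c⟫ / (‖x‖ · ‖c‖). Let Γ ∈ ℝ, let x ∈ E be nonzero with g(x) > Γ, and let δ ∈ E satisfy ‖δ‖ ≤ (1 − τ/(τ + 2·(g(x) − Γ))) · ‖x‖. Then |g(x + δ) − g(x)| ≤ g(x) − Γ. -/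
noncomputable def sigm (t : ℝ) : ℝ := Real.exp t / (Real.exp t + 1)

lemma sigm_hasDerivAt (t : ℝ) :
    HasDerivAt sigm (Real.exp t / (Real.exp t + 1) ^ 2) t := by
  have h := (Real.hasDerivAt_exp t).div ((Real.hasDerivAt_exp t).add_const 1)
    (by positivity)
  convert h using 1
  have hne : Real.exp t + 1 ≠ 0 := by positivity
  · rfl
  · rfl
  · rfl
  · ring

lemma sigm_lip (s t : ℝ) : |sigm s - sigm t| ≤ (1/4) * |s - t| := by
  have := Convex.norm_image_sub_le_of_norm_deriv_le (𝕜 := ℝ) (f := sigm) (s := Set.univ)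
    (C := 1/4) (fun z _ => (sigm_hasDerivAt z).differentiableAt)
    (fun z _ => by
      rw [(sigm_hasDerivAt z).deriv, Real.norm_eq_abs,
        abs_of_nonneg (by positivity), div_le_iff₀ (by positivity)]
      nlinarith [Real.exp_pos z, sq_nonneg (Real.exp z - 1)])
    convex_univ (Set.mem_univ t) (Set.mem_univ s)
  simpa [Real.norm_eq_abs] using this

lemma espressoG_eq {E : Type*} [NormedAddCommGroup E] [InnerProductSpace ℝ E]
    (τ : ℝ) (cu ca : E) (x : E) :
    espressoG τ cu ca x = sigm (τ * (cosSim x cu - cosSim x ca)) := by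
  unfold espressoG sigm
  rw [mul_sub, Real.exp_sub]
  have h1 := Real.exp_pos (τ * cosSim x cu)
  have h2 := Real.exp_pos (τ * cosSim x ca)
  rw [div_eq_div_iff (by positivity) (by positivity)]
  first
  | (field_simp; ring)
  | field_simp

/-- Difference of normalized vectors is controlled by the difference of the vectors. -/
lemma unit_sub_le {E : Type*} [NormedAddCommGroup E] [InnerProductSpace ℝ E]
    (x y : E) (hx : x ≠ 0) (hy : y ≠ 0) :
    ‖(‖y‖)⁻¹ • y - (‖x‖)⁻¹ • x‖ ≤ 2 * ‖y - x‖ / (‖x‖ + ‖y‖) := by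
  have hs : (0:ℝ) < ‖x‖ := norm_pos_iff.2 hx
  have hr : (0:ℝ) < ‖y‖ := norm_pos_iff.2 hy
  set p : ℝ := inner ℝ y x with hp
  have hpb : |p| ≤ ‖y‖ * ‖x‖ := abs_real_inner_le_norm y x
  have hp1 : p ≤ ‖y‖ * ‖x‖ := (abs_le.1 hpb).2
  have hp2 : -(‖y‖ * ‖x‖) ≤ p := (abs_le.1 hpb).1
  have hD : ‖y - x‖ ^ 2 = ‖y‖ ^ 2 - 2 * p + ‖x‖ ^ 2 := norm_sub_sq_real y x
  have hL : (‖y‖ * ‖x‖) * ‖(‖y‖)⁻¹ • y - (‖x‖)⁻¹ • x‖ ^ 2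
      = 2 * (‖y‖ * ‖x‖) - 2 * p := by
    rw [norm_sub_sq_real, norm_smul, norm_smul, real_inner_smul_left,
      real_inner_smul_right]
    simp only [norm_inv, norm_norm, ← hp]
    field_simp
    ring
  rw [le_div_iff₀ (by positivity), ← sub_nonneg]
  have e1 : ‖y‖ * ‖x‖ * ((‖(‖y‖)⁻¹ • y - (‖x‖)⁻¹ • x‖ * (‖x‖ + ‖y‖)) ^ 2)
      = (2 * (‖y‖ * ‖x‖) - 2 * p) * (‖x‖ + ‖y‖) ^ 2 := by
    rw [show ‖y‖ * ‖x‖ * ((‖(‖y‖)⁻¹ • y - (‖x‖)⁻¹ • x‖ * (‖x‖ + ‖y‖)) ^ 2)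
      = (‖y‖ * ‖x‖ * ‖(‖y‖)⁻¹ • y - (‖x‖)⁻¹ • x‖ ^ 2) * (‖x‖ + ‖y‖) ^ 2 from by ring, hL]
  have e2 : ‖y‖ * ‖x‖ * ((2 * ‖y - x‖) ^ 2)
      = 4 * (‖y‖ * ‖x‖) * (‖y‖ ^ 2 - 2 * p + ‖x‖ ^ 2) := by
    rw [show ‖y‖ * ‖x‖ * ((2 * ‖y - x‖) ^ 2) = (‖y - x‖ ^ 2) * (4 * (‖y‖ * ‖x‖)) from by
      ring, hD]
    ring
  have key : 0 ≤ (2 * ‖y - x‖) ^ 2 - (‖(‖y‖)⁻¹ • y - (‖x‖)⁻¹ • x‖ * (‖x‖ + ‖y‖)) ^ 2 := by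
    nlinarith [e1, e2, mul_pos hr hs,
      mul_nonneg (sq_nonneg (‖y‖ - ‖x‖)) (show (0:ℝ) ≤ ‖y‖ * ‖x‖ + p by linarith)]
  nlinarith [norm_nonneg (y - x), mul_nonneg (norm_nonneg ((‖y‖)⁻¹ • y - (‖x‖)⁻¹ • x))
    (by positivity : (0:ℝ) ≤ ‖x‖ + ‖y‖)]

lemma cosSim_sub_le {E : Type*} [NormedAddCommGroup E] [InnerProductSpace ℝ E]
    (x y c : E) (hx : x ≠ 0) (hy : y ≠ 0) (hc : c ≠ 0) :
    |cosSim y c - cosSim x c| ≤ 2 * ‖y - x‖ / (‖x‖ + ‖y‖) := by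
  have hcn : (0:ℝ) < ‖c‖ := norm_pos_iff.2 hc
  have hs : (0:ℝ) < ‖x‖ := norm_pos_iff.2 hx
  have hr : (0:ℝ) < ‖y‖ := norm_pos_iff.2 hy
  have h1 : cosSim y c - cosSim x c
      = inner ℝ ((‖y‖)⁻¹ • y - (‖x‖)⁻¹ • x) ((‖c‖)⁻¹ • c) := by
    rw [inner_sub_left, real_inner_smul_left, real_inner_smul_left,
      real_inner_smul_right, real_inner_smul_right]
    unfold cosSim
    first
    | (field_simp; ring)
    | field_simp
  rw [h1]
  calc |(inner ℝ ((‖y‖)⁻¹ • y - (‖x‖)⁻¹ • x) ((‖c‖)⁻¹ • c) : ℝ)|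
      ≤ ‖(‖y‖)⁻¹ • y - (‖x‖)⁻¹ • x‖ * ‖(‖c‖)⁻¹ • c‖ := abs_real_inner_le_norm _ _
    _ = ‖(‖y‖)⁻¹ • y - (‖x‖)⁻¹ • x‖ := by
        rw [norm_smul, norm_inv, norm_norm, inv_mul_cancel₀ hcn.ne']; ring
    _ ≤ 2 * ‖y - x‖ / (‖x‖ + ‖y‖) := unit_sub_le x y hx hy

theorem espresso_confidence_stability
    {E : Type*} [NormedAddCommGroup E] [InnerProductSpace ℝ E] [CompleteSpace E]
    (τ : ℝ) (hτ : 0 < τ) (cu ca : E) (hcu : cu ≠ 0) (hca : ca ≠ 0)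
    (Γ : ℝ) (x : E) (hx : x ≠ 0) (hgx : Γ < espressoG τ cu ca x)
    (δ : E)
    (hδ : ‖δ‖ ≤ (1 - τ / (τ + 2 * (espressoG τ cu ca x - Γ))) * ‖x‖) :
    |espressoG τ cu ca (x + δ) - espressoG τ cu ca x| ≤
      espressoG τ cu ca x - Γ := by
  set ε : ℝ := espressoG τ cu ca x - Γ with hε
  have hεpos : 0 < ε := by simp [hε]; linarith
  have hden : 0 < τ + 2 * ε := by linarith
  have hsx : (0:ℝ) < ‖x‖ := norm_pos_iff.2 hx
  have hcoef : 1 - τ / (τ + 2 * ε) = 2 * ε / (τ + 2 * ε) := by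
    field_simp
    ring
  have hδ' : ‖δ‖ * (τ + 2 * ε) ≤ 2 * ε * ‖x‖ := by
    rw [hcoef, div_mul_eq_mul_div, le_div_iff₀ hden] at hδ
    linarith
  have hδlt : ‖δ‖ < ‖x‖ := by
    nlinarith
  set y : E := x + δ with hy
  have hry : ‖x‖ - ‖δ‖ ≤ ‖y‖ := by
    have hxe : x = y - δ := by simp [hy]
    have : ‖x‖ ≤ ‖y‖ + ‖δ‖ := by rw [hxe]; exact norm_sub_le y δ
    linarith
  have hyne : y ≠ 0 := by
    intro h
    rw [h] at hry
    simp at hry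
    linarith
  have hyx : y - x = δ := by simp [hy]
  have hcosu := cosSim_sub_le x y cu hx hyne hcu
  have hcosa := cosSim_sub_le x y ca hx hyne hca
  rw [hyx] at hcosu hcosa
  have hS : (0:ℝ) < ‖x‖ + ‖y‖ := by positivity
  have hlip := sigm_lip (τ * (cosSim y cu - cosSim y ca)) (τ * (cosSim x cu - cosSim x ca))
  rw [espressoG_eq τ cu ca y, espressoG_eq τ cu ca x]
  calc |sigm (τ * (cosSim y cu - cosSim y ca)) - sigm (τ * (cosSim x cu - cosSim x ca))|
      ≤ (1/4) * |τ * (cosSim y cu - cosSim y ca) - τ * (cosSim x cu - cosSim x ca)| := hlip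
    _ = (τ/4) * |(cosSim y cu - cosSim x cu) - (cosSim y ca - cosSim x ca)| := by
        rw [show τ * (cosSim y cu - cosSim y ca) - τ * (cosSim x cu - cosSim x ca)
          = τ * ((cosSim y cu - cosSim x cu) - (cosSim y ca - cosSim x ca)) by ring,
          abs_mul, abs_of_pos hτ]; ring
    _ ≤ (τ/4) * (|cosSim y cu - cosSim x cu| + |cosSim y ca - cosSim x ca|) := by
        have := abs_sub (cosSim y cu - cosSim x cu) (cosSim y ca - cosSim x ca)
        nlinarith [abs_sub_abs_le_abs_sub (cosSim y cu - cosSim x cu)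
          (cosSim y ca - cosSim x ca), abs_sub_le_iff.1 (le_refl |(cosSim y cu - cosSim x cu) - (cosSim y ca - cosSim x ca)|)]
    _ ≤ (τ/4) * (2 * ‖δ‖ / (‖x‖ + ‖y‖) + 2 * ‖δ‖ / (‖x‖ + ‖y‖)) := by
        have h4 : (0:ℝ) < τ/4 := by linarith
        exact mul_le_mul_of_nonneg_left (add_le_add hcosu hcosa) h4.le
    _ = τ * ‖δ‖ / (‖x‖ + ‖y‖) := by field_simp; ring
    _ ≤ ε := by
        rw [div_le_iff₀ hS]
        nlinarith [mul_nonneg hεpos.le (norm_nonneg δ),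
          mul_le_mul_of_nonneg_left hry hεpos.le]
end

section
/- (Argmax form of Theorem 1.) Let E be a real inner product space, τ > 0, c^u, c^a ∈ E nonzero, and g(x) := exp(τ·cos(x,c^u)) / (exp(τ·cos(x,c^u)) + exp(τ·cos(x,c^a))) where cos(x,c) := ⟪x, c⟫ / (‖x‖ · ‖c‖). Let x ∈ E be nonzero with cos(x, c^u) > cos(x, c^a) (equivalently g(x) > 1/2, i.e., x is classified as unacceptable by the argmax rule). Then for every δ ∈ E with ‖δ‖ ≤ (1 − τ/(τ + 2·(g(x) − 1/2))) · ‖x‖, one has cos(x + δ, c^u) ≥ cos(x + δ, c^a); that is, the argmax classification of x + δ does not switch to acceptable. -/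
lemma sinh_le_mul_cosh {t : ℝ} (ht : 0 ≤ t) : Real.sinh t ≤ t * Real.cosh t := by
  have key : MonotoneOn (fun s : ℝ => s * Real.cosh s - Real.sinh s) (Set.Ici 0) := by
    apply monotoneOn_of_deriv_nonneg (convex_Ici 0)
    · fun_prop
    · fun_prop
    · intro s hs
      have hd : HasDerivAt (fun s : ℝ => s * Real.cosh s - Real.sinh s)
          (s * Real.sinh s) s := by
        have h : HasDerivAt (fun s : ℝ => s * Real.cosh s - Real.sinh s)
            (1 * Real.cosh s + s * Real.sinh s - Real.cosh s) s := ((hasDerivAt_id s).mul (Real.hasDerivAt_cosh s)).sub (Real.hasDerivAt_sinh s)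
        convert h using 1
        simp [mul_comm]
      rw [hd.deriv]
      have hs' : 0 < s := by simpa using hs
      have : (0:ℝ) ≤ Real.sinh s := by
        rw [← Real.sinh_zero]; exact Real.sinh_le_sinh.mpr hs'.le
      exact mul_nonneg hs'.le this
  have h0 : (0:ℝ) * Real.cosh 0 - Real.sinh 0 ≤ t * Real.cosh t - Real.sinh t :=
    key (Set.self_mem_Ici) ht ht
  simpa using h0

lemma exp_diff_le {p q : ℝ} (h : q ≤ p) :
    2 * (Real.exp p - Real.exp q) ≤ (p - q) * (Real.exp p + Real.exp q) := by
  set t := (p - q) / 2 with htdef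
  set m := (p + q) / 2 with hmdef
  have ht : 0 ≤ t := by rw [htdef]; linarith
  have hp : Real.exp p = Real.exp m * Real.exp t := by
    rw [← Real.exp_add]; congr 1; rw [htdef, hmdef]; ring
  have hq : Real.exp q = Real.exp m * Real.exp (-t) := by
    rw [← Real.exp_add]; congr 1; rw [htdef, hmdef]; ring
  have hs := sinh_le_mul_cosh ht
  rw [Real.sinh_eq, Real.cosh_eq] at hs
  have hpq : p - q = 2 * t := by rw [htdef]; ring
  have hm := Real.exp_pos m
  rw [hp, hq, hpq]
  nlinarith [hm.le]

set_option maxHeartbeats 800000 in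
/-- Argmax form of Theorem 1: certified robustness of the argmax rule. -/
theorem espresso_certified_robustness_argmax
    {E : Type*} [NormedAddCommGroup E] [InnerProductSpace ℝ E] [CompleteSpace E]
    (τ : ℝ) (hτ : 0 < τ) (cu ca : E) (hcu : cu ≠ 0) (hca : ca ≠ 0)
    (x : E) (hx : x ≠ 0) (hclass : cosSim x ca < cosSim x cu) :
    ∀ δ : E,
      ‖δ‖ ≤ (1 - τ / (τ + 2 * (espressoG τ cu ca x - 1 / 2))) * ‖x‖ →
      cosSim (x + δ) ca ≤ cosSim (x + δ) cu := by
  intro δ hδ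
  have hxn : (0:ℝ) < ‖x‖ := norm_pos_iff.mpr hx
  have hcun : (0:ℝ) < ‖cu‖ := norm_pos_iff.mpr hcu
  have hcan : (0:ℝ) < ‖ca‖ := norm_pos_iff.mpr hca
  set p := τ * cosSim x cu with hpdef
  set q := τ * cosSim x ca with hqdef
  have hqp : q < p := by exact mul_lt_mul_of_pos_left hclass hτ
  have heu : (0:ℝ) < Real.exp p := Real.exp_pos _
  have hea : (0:ℝ) < Real.exp q := Real.exp_pos _
  have heuea : Real.exp q < Real.exp p := Real.exp_lt_exp.mpr hqp
  set s := 2 * (espressoG τ cu ca x - 1 / 2) with hsdef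
  have hsval : s = (Real.exp p - Real.exp q) / (Real.exp p + Real.exp q) := by
    rw [hsdef]
    unfold espressoG
    rw [← hpdef, ← hqdef]
    field_simp
    ring
  have hspos : 0 < s := by
    rw [hsval]; exact div_pos (by linarith) (by linarith)
  have hsle : s ≤ (p - q) / 2 := by
    rw [hsval, div_le_div_iff₀ (by positivity) (by norm_num)]
    nlinarith [exp_diff_le hqp.le]
  have hτs : 0 < τ + s := by linarith
  have hR : 1 - τ / (τ + s) = s / (τ + s) := by field_simp; ring
  rw [hR] at hδ
  -- ‖δ‖ < ‖x‖, so x + δ ≠ 0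
  have hfrac : s / (τ + s) < 1 := by
    rw [div_lt_one hτs]; linarith
  have hδx : ‖δ‖ < ‖x‖ :=
    lt_of_le_of_lt hδ (by nlinarith)
  have hN : (0:ℝ) < ‖x + δ‖ := by
    have h1 : ‖x‖ ≤ ‖x + δ‖ + ‖δ‖ := by
      have := norm_add_le (x + δ) (-δ); simpa using this
    linarith
  -- the key scalar bound: 2‖δ‖ ≤ (cosᵤ − cosₐ)·‖x‖
  have hfrac2 : s / (τ + s) ≤ (cosSim x cu - cosSim x ca) / 2 := by
    have h1 : s / (τ + s) ≤ s / τ := by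
      apply div_le_div_of_nonneg_left hspos.le hτ; linarith
    have h2 : s / τ ≤ (cosSim x cu - cosSim x ca) / 2 := by
      rw [div_le_div_iff₀ hτ (by norm_num)]
      have : p - q = τ * (cosSim x cu - cosSim x ca) := by rw [hpdef, hqdef]; ring
      nlinarith [hsle]
    linarith
  have h2δ : 2 * ‖δ‖ ≤ cosSim x cu * ‖x‖ - cosSim x ca * ‖x‖ := by
    have h5 := mul_le_mul_of_nonneg_right hfrac2 hxn.le
    nlinarith [le_trans hδ h5]
  -- reduce to inner products divided by ‖c‖
  have hkey : (inner ℝ (x + δ) ca : ℝ) / ‖ca‖ ≤ (inner ℝ (x + δ) cu : ℝ) / ‖cu‖ := by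
    rw [inner_add_left, inner_add_left]
    have hba : (inner ℝ δ ca : ℝ) ≤ ‖δ‖ * ‖ca‖ := real_inner_le_norm δ ca
    have hbu : -(‖δ‖ * ‖cu‖) ≤ (inner ℝ δ cu : ℝ) := by
      have := real_inner_le_norm (-δ) cu
      simp only [inner_neg_left, norm_neg] at this
      linarith
    have hUx : (inner ℝ x cu : ℝ) / ‖cu‖ = cosSim x cu * ‖x‖ := by
      unfold cosSim; field_simp
    have hAx : (inner ℝ x ca : ℝ) / ‖ca‖ = cosSim x ca * ‖x‖ := by
      unfold cosSim; field_simp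
    rw [add_div, add_div, hUx, hAx]
    have h3 : (inner ℝ δ ca : ℝ) / ‖ca‖ ≤ ‖δ‖ := by
      rw [div_le_iff₀ hcan]; exact hba
    have h4 : -‖δ‖ ≤ (inner ℝ δ cu : ℝ) / ‖cu‖ := by
      rw [le_div_iff₀ hcun]; linarith
    linarith [h2δ, h3, h4]
  -- conclude by dividing by ‖x+δ‖
  unfold cosSim
  rw [show ‖x + δ‖ * ‖ca‖ = ‖ca‖ * ‖x + δ‖ from mul_comm _ _,
      show ‖x + δ‖ * ‖cu‖ = ‖cu‖ * ‖x + δ‖ from mul_comm _ _,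
      ← div_div, ← div_div]
  gcongr
end
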